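/- Let X, Y be finite sets, W a channel from X to Y, c : X → [0,∞) a cost function, λ ∈ [0,1), ν ≥ 0, and p_X a probability mass function on X. Define J(q_{XY}, p_X) = E_{q_{XY}}[ log( q_{Y|X}(Y|X)^{1−λ} q_Y(Y)^λ / (W(Y|X) e^{−λν c(X)}) ) ] + (1−λ) D(q_X ‖ p_X). Then min over joint distributions q_{XY} of J(q_{XY}, p_X) equals E_0^{(−λ,ν)}(p_X|W) := − log Σ_y [ Σ_x p_X(x) ( W(y|x) e^{−λν c(x)} )^{1/(1−λ)} ]^{1−λ}, and the minimum is attained by q_{X|Y}(x|y) = p_X(x)(W(y|x)e^{−λν c(x)})^{1/(1−λ)} / Σ_{x'} p_X(x')(W(y|x')e^{−λν c(x')})^{1/(1−λ)} and q_Y(y) proportional to ( Σ_x p_X(x)(W(y|x)e^{−λν c(x)})^{1/(1−λ)} )^{1−λ}. -/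

import Mathlib

open Finset Real

lemma gibbs' {ι : Type*} [Fintype ι] (a b : ι → ℝ) (ha : ∀ i, 0 ≤ a i)
    (hb : ∀ i, 0 ≤ b i) (hab : ∀ i, b i = 0 → a i = 0) (hsum : ∑ i, b i ≤ ∑ i, a i) :
    0 ≤ ∑ i, a i * Real.log (a i / b i) := by
  have h : ∀ i, a i - b i ≤ a i * Real.log (a i / b i) := by
    intro i
    rcases (ha i).eq_or_lt with h0 | h0
    · simp [← h0]
      exact hb i
    · have hbpos : 0 < b i := by
        rcases (hb i).eq_or_lt with hb0 | hb0
        · exact absurd (hab i hb0.symm) (by linarith)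
        · exact hb0
      have := Real.log_le_sub_one_of_pos (show 0 < b i / a i by positivity)
      have hlog : Real.log (b i / a i) = - Real.log (a i / b i) := by
        rw [← Real.log_inv]; congr 1; field_simp
      rw [hlog] at this
      have h2 : a i * (b i / a i - 1) = b i - a i := by field_simp
      nlinarith [mul_le_mul_of_nonneg_left this h0.le]
  calc (0:ℝ) ≤ ∑ i, (a i - b i) := by rw [Finset.sum_sub_distrib]; linarith
    _ ≤ _ := Finset.sum_le_sum fun i _ => h i

lemma term_eq (lam nu cx S px Wxy qxy qX qY Zy : ℝ)
    (hlam1 : lam < 1) (hS : 0 < S)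
    (h0 : px * Wxy = 0 → qxy = 0) (hq0 : 0 ≤ qxy) (hqX : qxy ≤ qX) (hqY : qxy ≤ qY)
    (hpx : 0 ≤ px) (hW : 0 ≤ Wxy)
    (hZ : px * (Wxy * Real.exp (-(lam * nu * cx))) ^ ((1:ℝ)/(1-lam)) ≤ Zy) :
    qxy * Real.log ((qxy / qX) ^ (1 - lam) * qY ^ lam /
        (Wxy * Real.exp (-(lam * nu * cx)))) +
      (1 - lam) * (qxy * Real.log (qX / px)) + qxy * Real.log S
    = (1 - lam) * (qxy * Real.log (qxy /
        (px * (Wxy * Real.exp (-(lam * nu * cx))) ^ ((1:ℝ)/(1-lam)) * Zy ^ (-lam) / S)))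
      + lam * (qxy * Real.log (qY / (Zy ^ (1 - lam) / S))) := by
  rcases hq0.eq_or_lt with h | hq
  · simp [← h]
  have hpW : px * Wxy ≠ 0 := fun h' => by linarith [h0 h']
  have hp : 0 < px := lt_of_le_of_ne hpx (by rintro rfl; simp at hpW)
  have hWp : 0 < Wxy := lt_of_le_of_ne hW (by rintro rfl; simp at hpW)
  have hE : 0 < Real.exp (-(lam * nu * cx)) := Real.exp_pos _
  have hWE : 0 < Wxy * Real.exp (-(lam * nu * cx)) := by positivity
  have hr : 0 < (Wxy * Real.exp (-(lam * nu * cx))) ^ ((1:ℝ)/(1-lam)) :=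
    Real.rpow_pos_of_pos hWE _
  have hZp : 0 < Zy := lt_of_lt_of_le (by positivity) hZ
  have hqXp : 0 < qX := lt_of_lt_of_le hq hqX
  have hqYp : 0 < qY := lt_of_lt_of_le hq hqY
  have h1lam : (1:ℝ) - lam ≠ 0 := by linarith
  rw [Real.log_div (by positivity) (by positivity),
    Real.log_mul (by positivity) (by positivity),
    Real.log_rpow (by positivity), Real.log_rpow hqYp,
    Real.log_div (ne_of_gt hq) (ne_of_gt hqXp),
    Real.log_mul (ne_of_gt hWp) (ne_of_gt hE), Real.log_exp,
    Real.log_div (ne_of_gt hqXp) (ne_of_gt hp),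
    Real.log_div (ne_of_gt hq) (by positivity),
    Real.log_div (by positivity) (ne_of_gt hS),
    Real.log_mul (by positivity) (ne_of_gt (Real.rpow_pos_of_pos hZp _)),
    Real.log_mul (ne_of_gt hp) (ne_of_gt hr),
    Real.log_rpow hWE, Real.log_rpow hZp,
    Real.log_div (ne_of_gt hqYp) (by positivity),
    Real.log_div (ne_of_gt (Real.rpow_pos_of_pos hZp _)) (ne_of_gt hS),
    Real.log_rpow hZp]
  rw [Real.log_mul (ne_of_gt hWp) (ne_of_gt hE), Real.log_exp]
  field_simp
  ring

theorem stmt_1 {X Y : Type*} [Fintype X] [Fintype Y]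
    (W : X → Y → ℝ) (hW0 : ∀ x y, 0 ≤ W x y) (hW1 : ∀ x, ∑ y, W x y = 1)
    (c : X → ℝ) (hc : ∀ x, 0 ≤ c x)
    (lam : ℝ) (hlam : lam ∈ Set.Ico (0 : ℝ) 1) (nu : ℝ) (hnu : 0 ≤ nu)
    (p : X → ℝ) (hp0 : ∀ x, 0 ≤ p x) (hp1 : ∑ x, p x = 1)
    (hpos : ∃ x y, 0 < p x * W x y) :
    let g : X → Y → ℝ := fun x y =>
      p x * (W x y * Real.exp (-(lam * nu * c x))) ^ ((1 : ℝ) / (1 - lam))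
    let Z : Y → ℝ := fun y => ∑ x, g x y
    let E0 : ℝ := - Real.log (∑ y, (Z y) ^ (1 - lam))
    let J : (X → Y → ℝ) → ℝ := fun q =>
      (∑ x, ∑ y, q x y *
          Real.log ((q x y / (∑ y', q x y')) ^ (1 - lam) * (∑ x', q x' y) ^ lam /
            (W x y * Real.exp (-(lam * nu * c x))))) +
        (1 - lam) * ∑ x, (∑ y, q x y) * Real.log ((∑ y, q x y) / p x)
    let qstar : X → Y → ℝ := fun x y =>
      g x y * (Z y) ^ (-lam) / (∑ y', (Z y') ^ (1 - lam))
    (∀ q : X → Y → ℝ, (∀ x y, 0 ≤ q x y) → (∑ x, ∑ y, q x y) = 1 →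
        (∀ x y, p x * W x y = 0 → q x y = 0) → E0 ≤ J q) ∧
      J qstar = E0 := by
  intro g Z E0 J qstar
  obtain ⟨hlam0, hlam1⟩ := hlam
  have h1l : (0:ℝ) < 1 - lam := by linarith
  have h1lne : (1:ℝ) - lam ≠ 0 := ne_of_gt h1l
  set S : ℝ := ∑ y, (Z y) ^ (1 - lam) with hSdef
  have hg0 : ∀ x y, 0 ≤ g x y := by
    intro x y
    simp only [g]
    exact mul_nonneg (hp0 x) (Real.rpow_nonneg (mul_nonneg (hW0 x y) (Real.exp_pos _).le) _)
  have hZ0 : ∀ y, 0 ≤ Z y := fun y => Finset.sum_nonneg fun x _ => hg0 x y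
  have hgZ : ∀ x y, g x y ≤ Z y := fun x y =>
    Finset.single_le_sum (fun x' _ => hg0 x' y) (Finset.mem_univ x)
  have hgz : ∀ x y, p x * W x y = 0 → g x y = 0 := by
    intro x y h
    rcases mul_eq_zero.1 h with h | h
    · simp [g, h]
    · simp only [g, h, zero_mul]
      rw [Real.zero_rpow (by positivity : (1:ℝ)/(1-lam) ≠ 0), mul_zero]
  have hzg : ∀ x y, g x y = 0 → p x * W x y = 0 := by
    intro x y h
    by_contra hne
    have hp : 0 < p x := lt_of_le_of_ne (hp0 x) (by rintro h'; exact hne (by rw [← h']; ring))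
    have hW : 0 < W x y := lt_of_le_of_ne (hW0 x y) (by rintro h'; exact hne (by rw [← h']; ring))
    have : 0 < g x y := by
      simp only [g]
      exact mul_pos hp (Real.rpow_pos_of_pos (mul_pos hW (Real.exp_pos _)) _)
    linarith
  obtain ⟨x0, y0, hx0⟩ := hpos
  have hg00 : 0 < g x0 y0 := by
    rcases (hg0 x0 y0).eq_or_lt with h | h
    · exact absurd (hzg x0 y0 h.symm) (ne_of_gt hx0)
    · exact h
  have hZ00 : 0 < Z y0 := lt_of_lt_of_le hg00 (hgZ x0 y0)
  have hS : 0 < S := by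
    have h1 : 0 < (Z y0) ^ (1 - lam) := Real.rpow_pos_of_pos hZ00 _
    exact lt_of_lt_of_le h1 (Finset.single_le_sum
      (fun y _ => Real.rpow_nonneg (hZ0 y) _) (Finset.mem_univ y0))
  have hZZ : ∀ y, Z y * (Z y) ^ (-lam) = (Z y) ^ (1 - lam) := by
    intro y
    rcases (hZ0 y).eq_or_lt with h | h
    · rw [← h, Real.zero_rpow h1lne, zero_mul]
    · rw [show (1:ℝ) - lam = 1 + (-lam) by ring, Real.rpow_add h, Real.rpow_one]
  have hqstar_sum_x : ∀ y, ∑ x, qstar x y = (Z y) ^ (1 - lam) / S := by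
    intro y
    simp only [qstar, ← hSdef]
    rw [← Finset.sum_div, ← Finset.sum_mul]
    rw [show (∑ x, g x y) = Z y from rfl, hZZ]
  have hqstar0 : ∀ x y, 0 ≤ qstar x y := by
    intro x y
    have h1 := hg0 x y
    have h2 : (0:ℝ) ≤ (Z y) ^ (-lam) := Real.rpow_nonneg (hZ0 y) _
    simp only [qstar, ← hSdef]
    exact div_nonneg (mul_nonneg h1 h2) hS.le
  have hqstar_sum : ∑ x, ∑ y, qstar x y = 1 := by
    rw [Finset.sum_comm]
    simp only [hqstar_sum_x]
    rw [← Finset.sum_div, ← hSdef, div_self (ne_of_gt hS)]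
  have hqstar_ac : ∀ x y, p x * W x y = 0 → qstar x y = 0 := by
    intro x y h
    simp [qstar, hgz x y h]
  have hqstar_zero : ∀ x y, qstar x y = 0 → p x * W x y = 0 := by
    intro x y h
    apply hzg x y
    by_contra hne
    have hgpos : 0 < g x y := lt_of_le_of_ne (hg0 x y) (Ne.symm hne)
    have hZpos : 0 < Z y := lt_of_lt_of_le hgpos (hgZ x y)
    have : 0 < qstar x y := by
      have h2 : 0 < (Z y) ^ (-lam) := Real.rpow_pos_of_pos hZpos _
      simp only [qstar, ← hSdef]
      exact div_pos (mul_pos hgpos h2) hS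
    linarith
  -- main identity
  have hiden : ∀ q : X → Y → ℝ, (∀ x y, 0 ≤ q x y) → (∑ x, ∑ y, q x y) = 1 →
      (∀ x y, p x * W x y = 0 → q x y = 0) →
      J q = (1 - lam) * (∑ x, ∑ y, q x y * Real.log (q x y / qstar x y))
        + lam * (∑ y, (∑ x, q x y) * Real.log ((∑ x, q x y) / ((Z y) ^ (1 - lam) / S)))
        - Real.log S := by
    intro q hq0 hq1 hqac
    have key : ∀ x y,
        q x y * Real.log ((q x y / (∑ y', q x y')) ^ (1 - lam) * (∑ x', q x' y) ^ lam /
            (W x y * Real.exp (-(lam * nu * c x)))) +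
          (1 - lam) * (q x y * Real.log ((∑ y', q x y') / p x)) + q x y * Real.log S
        = (1 - lam) * (q x y * Real.log (q x y / qstar x y))
          + lam * (q x y * Real.log ((∑ x', q x' y) / ((Z y) ^ (1 - lam) / S))) := by
      intro x y
      exact term_eq lam nu (c x) S (p x) (W x y) (q x y) (∑ y', q x y') (∑ x', q x' y) (Z y)
        hlam1 hS (hqac x y) (hq0 x y)
        (Finset.single_le_sum (fun y' _ => hq0 x y') (Finset.mem_univ y))
        (Finset.single_le_sum (fun x' _ => hq0 x' y) (Finset.mem_univ x))
        (hp0 x) (hW0 x y) (hgZ x y)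
    have e1 : ∑ x, ∑ y,
        (q x y * Real.log ((q x y / (∑ y', q x y')) ^ (1 - lam) * (∑ x', q x' y) ^ lam /
            (W x y * Real.exp (-(lam * nu * c x)))) +
          (1 - lam) * (q x y * Real.log ((∑ y', q x y') / p x)) + q x y * Real.log S)
        = ∑ x, ∑ y, ((1 - lam) * (q x y * Real.log (q x y / qstar x y))
          + lam * (q x y * Real.log ((∑ x', q x' y) / ((Z y) ^ (1 - lam) / S)))) :=
      Finset.sum_congr rfl fun x _ => Finset.sum_congr rfl fun y _ => key x y
    simp only [Finset.sum_add_distrib] at e1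
    have A : ∑ x, ∑ y, (1 - lam) * (q x y * Real.log ((∑ y', q x y') / p x))
        = (1 - lam) * ∑ x, (∑ y, q x y) * Real.log ((∑ y, q x y) / p x) := by
      rw [Finset.mul_sum]
      exact Finset.sum_congr rfl fun x _ => by rw [← Finset.mul_sum, ← Finset.sum_mul]
    have B : ∑ x, ∑ y, q x y * Real.log S = Real.log S := by
      simp only [← Finset.sum_mul]
      rw [hq1, one_mul]
    have C : ∑ x, ∑ y, lam * (q x y * Real.log ((∑ x', q x' y) / ((Z y) ^ (1 - lam) / S)))
        = lam * ∑ y, (∑ x, q x y) * Real.log ((∑ x, q x y) / ((Z y) ^ (1 - lam) / S)) := by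
      rw [Finset.sum_comm, Finset.mul_sum]
      exact Finset.sum_congr rfl fun y _ => by rw [← Finset.mul_sum, ← Finset.sum_mul]
    have D : ∑ x, ∑ y, (1 - lam) * (q x y * Real.log (q x y / qstar x y))
        = (1 - lam) * ∑ x, ∑ y, q x y * Real.log (q x y / qstar x y) := by
      simp only [← Finset.mul_sum]
    rw [A, B, C, D] at e1
    simp only [J]
    linarith
  constructor
  · intro q hq0 hq1 hqac
    rw [hiden q hq0 hq1 hqac]
    have G1 : 0 ≤ ∑ x, ∑ y, q x y * Real.log (q x y / qstar x y) := by
      have := gibbs' (fun i : X × Y => q i.1 i.2) (fun i : X × Y => qstar i.1 i.2)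
        (fun i => hq0 i.1 i.2) (fun i => hqstar0 i.1 i.2)
        (fun i h => hqac i.1 i.2 (hqstar_zero i.1 i.2 h))
        (by rw [Fintype.sum_prod_type, Fintype.sum_prod_type, hq1, hqstar_sum])
      rwa [Fintype.sum_prod_type] at this
    have G2 : 0 ≤ ∑ y, (∑ x, q x y) * Real.log ((∑ x, q x y) / ((Z y) ^ (1 - lam) / S)) := by
      apply gibbs'
      · intro y; exact Finset.sum_nonneg fun x _ => hq0 x y
      · intro y; exact div_nonneg (Real.rpow_nonneg (hZ0 y) _) hS.le
      · intro y h
        have hZy : Z y = 0 := by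
          have : (Z y) ^ (1 - lam) = 0 := by
            field_simp at h; exact h.trans (mul_zero S)
          exact (Real.rpow_eq_zero (hZ0 y) h1lne).1 this
        apply Finset.sum_eq_zero
        intro x _
        apply hqac x y
        apply hzg x y
        have := (Finset.sum_eq_zero_iff_of_nonneg (fun x' _ => hg0 x' y)).1 hZy
        exact this x (Finset.mem_univ x)
      · have hb : ∑ y, (Z y) ^ (1 - lam) / S = 1 := by
          rw [← Finset.sum_div, ← hSdef, div_self (ne_of_gt hS)]
        have ha : ∑ y, ∑ x, q x y = 1 := by rw [Finset.sum_comm]; exact hq1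
        rw [hb, ha]
    have hE0 : E0 = - Real.log S := rfl
    rw [hE0]
    nlinarith
  · rw [hiden qstar hqstar0 hqstar_sum hqstar_ac]
    have T1 : ∑ x, ∑ y, qstar x y * Real.log (qstar x y / qstar x y) = 0 := by
      apply Finset.sum_eq_zero; intro x _
      apply Finset.sum_eq_zero; intro y _
      rcases eq_or_ne (qstar x y) 0 with h | h
      · simp [h]
      · rw [div_self h, Real.log_one, mul_zero]
    have T2 : ∑ y, (∑ x, qstar x y) * Real.log ((∑ x, qstar x y) / ((Z y) ^ (1 - lam) / S))
        = 0 := by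
      apply Finset.sum_eq_zero; intro y _
      rw [hqstar_sum_x y]
      rcases eq_or_ne ((Z y) ^ (1 - lam) / S) 0 with h | h
      · simp [h]
      · rw [div_self h, Real.log_one, mul_zero]
    rw [T1, T2]
    simp [E0, ← hSdef]
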